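/- Let H = A_1 ∧ ⋯ ∧ A_N be a CNF formula over Boolean variables x_1, ..., x_m in which every clause consists of exactly k distinct literals on k distinct variables, and suppose each clause intersects (shares a variable, possibly negated, with) at most d other clauses. If e·(d+1) ≤ 2^k, where e is Euler's number, then H is satisfiable: there exists a truth assignment to x_1, ..., x_m under which every clause A_i evaluates to true. -/

import Mathlib

open scoped Classical

namespace KCNFAux

variable {m N : ℕ}

noncomputable def FC (A : Fin N → Finset (Fin m × Bool)) (S : Finset (Fin N)) : ℕ :=
  (Finset.univ.filter fun σ : Fin m → Bool => ∀ i ∈ S, ∃ l ∈ A i, σ l.1 = l.2).card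

lemma viol_count (k : ℕ) (C : Finset (Fin m × Bool)) (hk : (C.image Prod.fst).card = k)
    (P : (Fin m → Bool) → Prop)
    (hP : ∀ σ τ : Fin m → Bool, (∀ v, v ∉ C.image Prod.fst → σ v = τ v) → P σ → P τ) :
    (Finset.univ.filter fun σ : Fin m → Bool => P σ ∧ ∀ l ∈ C, σ l.1 ≠ l.2).card * 2 ^ k ≤
      (Finset.univ.filter fun σ : Fin m → Bool => P σ).card := by
  classical
  set V : Finset (Fin m) := C.image Prod.fst with hV
  set D : Finset (Fin m → Bool) :=
    Fintype.piFinset (fun v => if v ∈ V then (Finset.univ : Finset Bool) else {false}) with hD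
  have hmemD : ∀ τ ∈ D, ∀ v, v ∉ V → τ v = false := by
    intro τ hτ v hv
    have := Fintype.mem_piFinset.mp hτ v
    rw [if_neg hv] at this
    simpa using this
  have hDcard : D.card = 2 ^ k := by
    rw [hD, Fintype.card_piFinset]
    have h1 : ∀ v : Fin m,
        ((if v ∈ V then (Finset.univ : Finset Bool) else {false}).card) =
          (if v ∈ V then 2 else 1 : ℕ) := by
      intro v; split <;> simp
    calc (∏ v : Fin m, (if v ∈ V then (Finset.univ : Finset Bool) else {false}).card)
        = ∏ v : Fin m, (if v ∈ V then 2 else 1 : ℕ) := by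
          exact Finset.prod_congr rfl (fun v _ => h1 v)
      _ = ∏ v ∈ Finset.univ ∩ V, (2:ℕ) := Finset.prod_ite_mem _ _ _
      _ = 2 ^ k := by rw [Finset.univ_inter, Finset.prod_const, hk]
  set e : ((Fin m → Bool) × (Fin m → Bool)) → (Fin m → Bool) :=
    fun p v => if v ∈ V then p.2 v else p.1 v with he
  have hcard : ((Finset.univ.filter fun σ : Fin m → Bool =>
      P σ ∧ ∀ l ∈ C, σ l.1 ≠ l.2) ×ˢ D).card
      = (Finset.univ.filter fun σ : Fin m → Bool =>
      P σ ∧ ∀ l ∈ C, σ l.1 ≠ l.2).card * 2 ^ k := by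
    rw [Finset.card_product, hDcard]
  rw [← hcard]
  apply Finset.card_le_card_of_injOn e
  · rintro ⟨σ, τ⟩ hp
    rw [Finset.mem_coe, Finset.mem_product, Finset.mem_filter] at hp
    rw [Finset.mem_coe, Finset.mem_filter]
    refine ⟨Finset.mem_univ _, ?_⟩
    apply hP σ _ _ hp.1.2.1
    intro v hv
    simp only [he, if_neg hv]
  · rintro ⟨σ₁, τ₁⟩ hp₁ ⟨σ₂, τ₂⟩ hp₂ heq
    simp only [Finset.coe_product, Set.mem_prod, Finset.mem_coe, Finset.mem_filter] at hp₁ hp₂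
    have hviol₁ := hp₁.1.2.2
    have hviol₂ := hp₂.1.2.2
    have heq' : ∀ v, (if v ∈ V then τ₁ v else σ₁ v) = (if v ∈ V then τ₂ v else σ₂ v) :=
      fun v => congrFun heq v
    have hτ : τ₁ = τ₂ := by
      funext v
      by_cases hv : v ∈ V
      · have := heq' v; rwa [if_pos hv, if_pos hv] at this
      · rw [hmemD τ₁ hp₁.2 v hv, hmemD τ₂ hp₂.2 v hv]
    have hσ : σ₁ = σ₂ := by
      funext v
      by_cases hv : v ∈ V
      · obtain ⟨l, hl, hl1⟩ := Finset.mem_image.mp hv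
        have h₁ : σ₁ l.1 = !l.2 := Bool.eq_not_of_ne (hviol₁ l hl)
        have h₂ : σ₂ l.1 = !l.2 := Bool.eq_not_of_ne (hviol₂ l hl)
        rw [← hl1, h₁, h₂]
      · have := heq' v; rwa [if_neg hv, if_neg hv] at this
    rw [hτ, hσ]

lemma main_step (A : Fin N → Finset (Fin m × Bool)) (k d : ℕ)
    (hvars : ∀ i, ((A i).image Prod.fst).card = k)
    (hinter : ∀ i : Fin N,
      (Finset.univ.filter (fun j : Fin N => j ≠ i ∧
        (((A i).image Prod.fst) ∩ ((A j).image Prod.fst)).Nonempty)).card ≤ d)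
    (hkey : ∀ c, c ≤ d → (1:ℝ) ≤ (1/((d:ℝ)+2)) * (1 - 1/((d:ℝ)+2))^c * 2^k) :
    ∀ n : ℕ, ∀ S : Finset (Fin N), S.card < n → ∀ i ∉ S,
      (1 - 1/((d:ℝ)+2)) * (FC A S : ℝ) ≤ (FC A (insert i S) : ℝ) := by
  intro n
  induction n with
  | zero => intro S hS; omega
  | succ n IH =>
    intro S hS i hi
    have hd0 : (0:ℝ) ≤ (d:ℝ) := Nat.cast_nonneg d
    have hx0 : (0:ℝ) < 1/((d:ℝ)+2) := by positivity
    have hx1 : (1:ℝ)/((d:ℝ)+2) ≤ 1 := by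
      rw [div_le_one (by positivity)]; linarith
    have h1x0 : (0:ℝ) ≤ 1 - 1/((d:ℝ)+2) := by linarith
    set S₁ : Finset (Fin N) := S.filter (fun j => j ≠ i ∧
      (((A i).image Prod.fst) ∩ ((A j).image Prod.fst)).Nonempty) with hS₁def
    set S₂ : Finset (Fin N) := S \ S₁ with hS₂def
    have hS₁S : S₁ ⊆ S := Finset.filter_subset _ _
    have hS₂S : S₂ ⊆ S := Finset.sdiff_subset
    have hS1d : S₁.card ≤ d := by
      refine le_trans (Finset.card_le_card ?_) (hinter i)
      intro j hj
      rw [hS₁def, Finset.mem_filter] at hj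
      rw [Finset.mem_filter]
      exact ⟨Finset.mem_univ _, hj.2⟩
    have chain : ∀ T : Finset (Fin N), T ⊆ S₁ →
        (1 - 1/((d:ℝ)+2))^T.card * (FC A S₂ : ℝ) ≤ (FC A (S₂ ∪ T) : ℝ) := by
      intro T
      induction T using Finset.induction_on with
      | empty => intro _; simp
      | @insert a T ha IH2 =>
        intro hsub
        have haS₁ : a ∈ S₁ := hsub (Finset.mem_insert_self a T)
        have hTS₁ : T ⊆ S₁ := fun x hx => hsub (Finset.mem_insert_of_mem hx)
        have haS : a ∈ S := hS₁S haS₁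
        have haT : a ∉ S₂ ∪ T := by
          rw [Finset.mem_union]
          rintro (h | h)
          · rw [hS₂def, Finset.mem_sdiff] at h; exact h.2 haS₁
          · exact ha h
        have hsubS : S₂ ∪ T ⊆ S := Finset.union_subset hS₂S (hTS₁.trans hS₁S)
        have hcardlt : (S₂ ∪ T).card < n := by
          have hss : S₂ ∪ T ⊂ S := (Finset.ssubset_iff_of_subset hsubS).mpr ⟨a, haS, haT⟩
          have := Finset.card_lt_card hss
          omega
        have step := IH (S₂ ∪ T) hcardlt a haT
        have hins : insert a (S₂ ∪ T) = S₂ ∪ insert a T := by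
          rw [Finset.union_insert]
        rw [hins] at step
        calc (1 - 1/((d:ℝ)+2))^(insert a T).card * (FC A S₂ : ℝ)
            = (1 - 1/((d:ℝ)+2)) * ((1 - 1/((d:ℝ)+2))^T.card * (FC A S₂ : ℝ)) := by
              rw [Finset.card_insert_of_notMem ha]; ring
          _ ≤ (1 - 1/((d:ℝ)+2)) * (FC A (S₂ ∪ T) : ℝ) :=
              mul_le_mul_of_nonneg_left (IH2 hTS₁) h1x0
          _ ≤ (FC A (S₂ ∪ insert a T) : ℝ) := step
    have hS₂union : S₂ ∪ S₁ = S := Finset.sdiff_union_of_subset hS₁S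
    have hchainS : (1 - 1/((d:ℝ)+2))^S₁.card * (FC A S₂ : ℝ) ≤ (FC A S : ℝ) := by
      have := chain S₁ (subset_refl _)
      rwa [hS₂union] at this
    set cnt : ℕ := (Finset.univ.filter fun σ : Fin m → Bool =>
      (∀ j ∈ S, ∃ l ∈ A j, σ l.1 = l.2) ∧ ∀ l ∈ A i, σ l.1 ≠ l.2).card with hcnt
    set cnt₂ : ℕ := (Finset.univ.filter fun σ : Fin m → Bool =>
      (∀ j ∈ S₂, ∃ l ∈ A j, σ l.1 = l.2) ∧ ∀ l ∈ A i, σ l.1 ≠ l.2).card with hcnt₂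
    have hsplit : FC A (insert i S) + cnt = FC A S := by
      have hpart := Finset.card_filter_add_card_filter_not
        (s := Finset.univ.filter fun σ : Fin m → Bool => ∀ j ∈ S, ∃ l ∈ A j, σ l.1 = l.2)
        (p := fun σ : Fin m → Bool => ∃ l ∈ A i, σ l.1 = l.2)
      rw [Finset.filter_filter, Finset.filter_filter] at hpart
      have e1 : (Finset.univ.filter fun σ : Fin m → Bool =>
          (∀ j ∈ S, ∃ l ∈ A j, σ l.1 = l.2) ∧ ∃ l ∈ A i, σ l.1 = l.2) =
          Finset.univ.filter fun σ : Fin m → Bool =>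
            ∀ j ∈ insert i S, ∃ l ∈ A j, σ l.1 = l.2 := by
        apply Finset.filter_congr
        intro σ _
        rw [Finset.forall_mem_insert]
        tauto
      have e2 : (Finset.univ.filter fun σ : Fin m → Bool =>
          (∀ j ∈ S, ∃ l ∈ A j, σ l.1 = l.2) ∧ ¬∃ l ∈ A i, σ l.1 = l.2) =
          Finset.univ.filter fun σ : Fin m → Bool =>
          (∀ j ∈ S, ∃ l ∈ A j, σ l.1 = l.2) ∧ ∀ l ∈ A i, σ l.1 ≠ l.2 := by
        apply Finset.filter_congr
        intro σ _
        simp only [not_exists, not_and]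
      rw [e1, e2] at hpart
      unfold FC
      rw [hcnt]
      exact hpart
    have hmono : cnt ≤ cnt₂ := by
      apply Finset.card_le_card
      intro σ hσ
      rw [Finset.mem_filter] at hσ ⊢
      exact ⟨hσ.1, fun j hj => hσ.2.1 j (hS₂S hj), hσ.2.2⟩
    have hPagree : ∀ σ τ : Fin m → Bool,
        (∀ v, v ∉ (A i).image Prod.fst → σ v = τ v) →
        (∀ j ∈ S₂, ∃ l ∈ A j, σ l.1 = l.2) → (∀ j ∈ S₂, ∃ l ∈ A j, τ l.1 = l.2) := by
      intro σ τ hagree hsat j hj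
      obtain ⟨l, hl, hval⟩ := hsat j hj
      refine ⟨l, hl, ?_⟩
      rw [← hagree l.1 ?_]
      · exact hval
      · intro hmem
        have hj2 : j ∉ S₁ := by rw [hS₂def, Finset.mem_sdiff] at hj; exact hj.2
        apply hj2
        rw [hS₁def, Finset.mem_filter]
        refine ⟨hS₂S hj, ?_,
          ⟨l.1, Finset.mem_inter.mpr ⟨hmem, Finset.mem_image_of_mem Prod.fst hl⟩⟩⟩
        rintro rfl
        exact hi (hS₂S hj)
    have hviol : cnt₂ * 2 ^ k ≤ FC A S₂ := by
      rw [hcnt₂]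
      unfold FC
      have h0 := viol_count k (A i) (hvars i)
        (fun σ => ∀ j ∈ S₂, ∃ l ∈ A j, σ l.1 = l.2) hPagree
      refine le_trans (Nat.mul_le_mul_right _ (Finset.card_le_card ?_))
        (le_trans h0 (Finset.card_le_card ?_))
      · intro σ hσ
        simp only [Finset.mem_filter] at hσ ⊢
        exact hσ
      · intro σ hσ
        simp only [Finset.mem_filter] at hσ ⊢
        exact hσ
    have R2 : (cnt₂:ℝ) * 2^k ≤ (FC A S₂ : ℝ) := by exact_mod_cast hviol
    have R1 : (cnt:ℝ) ≤ (cnt₂:ℝ) := by exact_mod_cast hmono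
    have hkc := hkey S₁.card hS1d
    have hpow0 : (0:ℝ) ≤ (1 - 1/((d:ℝ)+2))^S₁.card := pow_nonneg h1x0 _
    have hcntx : (cnt:ℝ) ≤ (1/((d:ℝ)+2)) * (FC A S : ℝ) := by
      calc (cnt:ℝ) ≤ (cnt₂:ℝ) := R1
        _ = 1 * (cnt₂:ℝ) := (one_mul _).symm
        _ ≤ ((1/((d:ℝ)+2)) * (1 - 1/((d:ℝ)+2))^S₁.card * 2^k) * (cnt₂:ℝ) :=
            mul_le_mul_of_nonneg_right hkc (Nat.cast_nonneg _)
        _ = (1/((d:ℝ)+2)) * ((1 - 1/((d:ℝ)+2))^S₁.card * ((cnt₂:ℝ) * 2^k)) := by ring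
        _ ≤ (1/((d:ℝ)+2)) * ((1 - 1/((d:ℝ)+2))^S₁.card * (FC A S₂ : ℝ)) :=
            mul_le_mul_of_nonneg_left (mul_le_mul_of_nonneg_left R2 hpow0) hx0.le
        _ ≤ (1/((d:ℝ)+2)) * (FC A S : ℝ) :=
            mul_le_mul_of_nonneg_left hchainS hx0.le
    have hR : (FC A (insert i S) : ℝ) + (cnt:ℝ) = (FC A S : ℝ) := by exact_mod_cast hsplit
    linarith


lemma lll_numeric (d k : ℕ) (h : Real.exp 1 * ((d:ℝ)+1) ≤ 2 ^ k) :
    1 ≤ (1/((d:ℝ)+2)) * (1 - 1/((d:ℝ)+2))^d * 2^k := by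
  have hd1 : (0:ℝ) < (d:ℝ)+1 := by positivity
  have hd2 : (0:ℝ) < (d:ℝ)+2 := by positivity
  have h1x : 1 - 1/((d:ℝ)+2) = ((d:ℝ)+1)/((d:ℝ)+2) := by field_simp; ring
  have hexp : (((d:ℝ)+2)/((d:ℝ)+1))^(d+1) ≤ Real.exp 1 := by
    have h0 : ((d:ℝ)+2)/((d:ℝ)+1) = 1 + 1/((d:ℝ)+1) := by field_simp; ring
    have h1 : 1 + 1/((d:ℝ)+1) ≤ Real.exp (1/((d:ℝ)+1)) := by
      have := Real.add_one_le_exp (1/((d:ℝ)+1)); linarith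
    calc (((d:ℝ)+2)/((d:ℝ)+1))^(d+1)
        ≤ (Real.exp (1/((d:ℝ)+1)))^(d+1) := by
          apply pow_le_pow_left₀ (by positivity) (by rw [h0]; exact h1)
      _ = Real.exp 1 := by
          rw [← Real.exp_nat_mul]
          congr 1
          push_cast
          field_simp
  have key : ((d:ℝ)+2)^(d+1) ≤ ((d:ℝ)+1)^d * 2^k := by
    have e1 : ((d:ℝ)+2)^(d+1) ≤ Real.exp 1 * ((d:ℝ)+1)^(d+1) := by
      have h2 := mul_le_mul_of_nonneg_right hexp (pow_nonneg hd1.le (d+1))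
      rwa [div_pow, div_mul_cancel₀] at h2
      positivity
    have e2 : Real.exp 1 * ((d:ℝ)+1)^(d+1) ≤ 2^k * ((d:ℝ)+1)^d := by
      have h3 : ((d:ℝ)+1)^(d+1) = ((d:ℝ)+1) * ((d:ℝ)+1)^d := by ring
      rw [h3, ← mul_assoc]
      exact mul_le_mul_of_nonneg_right h (pow_nonneg hd1.le d)
    linarith
  have hb : (0:ℝ) < ((d:ℝ)+2)^(d+1) := by positivity
  have expand : (1/((d:ℝ)+2)) * (((d:ℝ)+1)^d/((d:ℝ)+2)^d) * 2^k
      = (((d:ℝ)+1)^d * 2^k) / ((d:ℝ)+2)^(d+1) := by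
    field_simp
    ring
  rw [h1x, div_pow, expand, le_div_iff₀ hb, one_mul]
  exact key

end KCNFAux


/-- **Satisfiability of `k`-CNF formulas via the Lovász Local Lemma.** Consider a CNF
formula with `N` clauses over `m` Boolean variables, where each clause is a set of
exactly `k` literals (pairs of a variable and a polarity) on `k` distinct variables.
If each clause shares a variable with at most `d` other clauses and
`e(d+1) ≤ 2^k`, then the formula is satisfiable. -/
theorem kCNF_satisfiable (m N k d : ℕ) (A : Fin N → Finset (Fin m × Bool))
    (hsize : ∀ i, (A i).card = k)
    (hvars : ∀ i, ((A i).image Prod.fst).card = k)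
    (hinter : ∀ i : Fin N,
      (Finset.univ.filter (fun j : Fin N => j ≠ i ∧
        (((A i).image Prod.fst) ∩ ((A j).image Prod.fst)).Nonempty)).card ≤ d)
    (hLLL : Real.exp 1 * ((d : ℝ) + 1) ≤ 2 ^ k) :
    ∃ σ : Fin m → Bool, ∀ i : Fin N, ∃ l ∈ A i, σ l.1 = l.2 := by
  classical
  have hd0 : (0:ℝ) ≤ (d:ℝ) := Nat.cast_nonneg d
  have hd2 : (0:ℝ) < (d:ℝ)+2 := by positivity
  have hx1 : (1:ℝ)/((d:ℝ)+2) ≤ 1 := by rw [div_le_one hd2]; linarith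
  have h1x0 : (0:ℝ) ≤ 1 - 1/((d:ℝ)+2) := by linarith
  have h1xpos : (0:ℝ) < 1 - 1/((d:ℝ)+2) := by
    rw [sub_pos, div_lt_one hd2]; linarith
  have hkey : ∀ c, c ≤ d → (1:ℝ) ≤ (1/((d:ℝ)+2)) * (1 - 1/((d:ℝ)+2))^c * 2^k := by
    intro c hc
    have base := KCNFAux.lll_numeric d k hLLL
    have hpow : (1 - 1/((d:ℝ)+2))^d ≤ (1 - 1/((d:ℝ)+2))^c :=
      pow_le_pow_of_le_one h1x0 (by linarith [one_div_nonneg.mpr hd2.le]) hc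
    calc (1:ℝ) ≤ (1/((d:ℝ)+2)) * (1 - 1/((d:ℝ)+2))^d * 2^k := base
      _ ≤ (1/((d:ℝ)+2)) * (1 - 1/((d:ℝ)+2))^c * 2^k := by
          apply mul_le_mul_of_nonneg_right
            (mul_le_mul_of_nonneg_left hpow (by positivity)) (by positivity)
  have main := KCNFAux.main_step A k d hvars hinter hkey
  have grow : ∀ S : Finset (Fin N),
      (1 - 1/((d:ℝ)+2))^S.card * ((2:ℝ)^m) ≤ (KCNFAux.FC A S : ℝ) := by
    intro S
    induction S using Finset.induction_on with
    | empty =>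
      simp only [Finset.card_empty, pow_zero, one_mul]
      unfold KCNFAux.FC
      rw [Finset.filter_true_of_mem
        (fun σ _ => fun j hj => absurd hj (Finset.notMem_empty j))]
      rw [Finset.card_univ]
      simp
    | @insert a S ha IH =>
      have step := main (S.card + 1) S (Nat.lt_succ_self _) a ha
      calc (1 - 1/((d:ℝ)+2))^(insert a S).card * ((2:ℝ)^m)
          = (1 - 1/((d:ℝ)+2)) * ((1 - 1/((d:ℝ)+2))^S.card * ((2:ℝ)^m)) := by
            rw [Finset.card_insert_of_notMem ha]; ring
        _ ≤ (1 - 1/((d:ℝ)+2)) * (KCNFAux.FC A S : ℝ) :=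
            mul_le_mul_of_nonneg_left IH h1x0
        _ ≤ (KCNFAux.FC A (insert a S) : ℝ) := step
  have hpos : (0:ℝ) < (KCNFAux.FC A Finset.univ : ℝ) :=
    lt_of_lt_of_le (by positivity) (grow Finset.univ)
  have hne : 0 < KCNFAux.FC A Finset.univ := by exact_mod_cast hpos
  unfold KCNFAux.FC at hne
  obtain ⟨σ, hσ⟩ := Finset.card_pos.mp hne
  rw [Finset.mem_filter] at hσ
  exact ⟨σ, fun i => hσ.2 i (Finset.mem_univ i)⟩
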